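/- Let u be an alternating permutation of length 2n avoiding 2143 with exactly b active values, and let w be an alternating permutation of length 2n+2 avoiding 2143 whose first 2n entries are order-isomorphic to u. Then the number of active values for w is at most b + 2. -/

import Mathlib

/-- A word `w : Fin n → ℕ` is a permutation of length `n` (1-indexed values). -/
def IsPermWord (n : ℕ) (w : Fin n → ℕ) : Prop :=
  Function.Injective w ∧ Set.range w = Set.Icc 1 n

/-- `w` contains the pattern 2143. -/
def Contains2143 {n : ℕ} (w : Fin n → ℕ) : Prop :=
  ∃ i1 i2 i3 i4 : Fin n, i1 < i2 ∧ i2 < i3 ∧ i3 < i4 ∧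
    w i2 < w i1 ∧ w i1 < w i4 ∧ w i4 < w i3

/-- `w` contains the pattern 1234 (a four-term increasing subsequence). -/
def Contains1234 {n : ℕ} (w : Fin n → ℕ) : Prop :=
  ∃ i1 i2 i3 i4 : Fin n, i1 < i2 ∧ i2 < i3 ∧ i3 < i4 ∧
    w i1 < w i2 ∧ w i2 < w i3 ∧ w i3 < w i4

/-- `w` contains the pattern `p`. -/
def ContainsPat {n k : ℕ} (w : Fin n → ℕ) (p : Fin k → ℕ) : Prop :=
  ∃ f : Fin k → Fin n, StrictMono f ∧ ∀ a b : Fin k, p a < p b ↔ w (f a) < w (f b)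

/-- The extension `w ← c`: bump every entry `≥ c` by one and append `c`. -/
def extendBy {n : ℕ} (w : Fin n → ℕ) (c : ℕ) : Fin (n + 1) → ℕ :=
  fun j => if h : (j : ℕ) < n then (if c ≤ w ⟨j, h⟩ then w ⟨j, h⟩ + 1 else w ⟨j, h⟩) else c

/-- `c` is an active value for `w` (with respect to the pattern 2143). -/
def IsActive {n : ℕ} (w : Fin n → ℕ) (c : ℕ) : Prop :=
  ¬ Contains2143 (extendBy w c)

/-- `w` is (up-down) alternating: `w 1 < w 2 > w 3 < w 4 > ...` (1-indexed). -/
def Alternating {n : ℕ} (w : Fin n → ℕ) : Prop :=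
  ∀ (i : ℕ) (h : i + 1 < n),
    if i % 2 = 0 then w ⟨i, by omega⟩ < w ⟨i + 1, h⟩ else w ⟨i + 1, h⟩ < w ⟨i, by omega⟩

/-- The set of active values for `w` among `{1, ..., n+1}`. -/
def activeSet {n : ℕ} (w : Fin n → ℕ) : Set ℕ :=
  {c | 1 ≤ c ∧ c ≤ n + 1 ∧ IsActive w c}

/-- The reverse-complement of a word of length `m` (1-indexed values). -/
def revComp {m : ℕ} (w : Fin m → ℕ) : Fin m → ℕ :=
  fun i => m + 1 - w i.rev

/-- `T` is a standard Young tableau of rectangular shape `(n, n, n)`,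
entries `1, ..., 3n` each used once, rows and columns strictly increasing. -/
structure IsSYT3 (n : ℕ) (T : Fin 3 → Fin n → ℕ) : Prop where
  inj : Function.Injective (fun p : Fin 3 × Fin n => T p.1 p.2)
  range_eq : (Set.range fun p : Fin 3 × Fin n => T p.1 p.2) = Set.Icc 1 (3 * n)
  row_inc : ∀ i : Fin 3, StrictMono (T i)
  col_inc : ∀ j : Fin n, StrictMono (fun i : Fin 3 => T i j)

/-- `(T1, T2, T3)` is a shifted standard Young tableau of shape `(n+2, n+1, n)`:
row `i` is indented `i - 1` columns; entries `1, ..., 3n+3` each used once,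
rows strictly increasing, and (shifted) columns strictly increasing. -/
structure IsShiftedSYT (n : ℕ) (T1 : Fin (n + 2) → ℕ) (T2 : Fin (n + 1) → ℕ)
    (T3 : Fin n → ℕ) : Prop where
  inj : Function.Injective (Sum.elim T1 (Sum.elim T2 T3))
  range_eq : Set.range (Sum.elim T1 (Sum.elim T2 T3)) = Set.Icc 1 (3 * n + 3)
  row1 : StrictMono T1
  row2 : StrictMono T2
  row3 : StrictMono T3
  col12 : ∀ j : Fin (n + 1), T1 j.succ < T2 j
  col23 : ∀ j : Fin n, T2 j.succ < T3 j

lemma extendBy_lt {m : ℕ} (v : Fin m → ℕ) (d : ℕ) (j : Fin (m + 1)) (h : (j : ℕ) < m) :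
    extendBy v d j = if d ≤ v ⟨j, h⟩ then v ⟨j, h⟩ + 1 else v ⟨j, h⟩ := dif_pos h

lemma extendBy_last {m : ℕ} (v : Fin m → ℕ) (d : ℕ) (j : Fin (m + 1)) (h : ¬ (j : ℕ) < m) :
    extendBy v d j = d := dif_neg h

lemma rank_eq {m : ℕ} {v : Fin m → ℕ} (hv : IsPermWord m v) (p : Fin m) :
    v p = (Finset.univ.filter fun q => v q ≤ v p).card := by
  classical
  have hmem : ∀ q, v q ∈ Set.Icc 1 m := fun q => hv.2 ▸ ⟨q, rfl⟩
  have himg : (Finset.univ.filter fun q => v q ≤ v p).image v = Finset.Icc 1 (v p) := by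
    ext y
    simp only [Finset.mem_image, Finset.mem_filter, Finset.mem_univ, true_and, Finset.mem_Icc]
    constructor
    · rintro ⟨q, hq, rfl⟩; exact ⟨(hmem q).1, hq⟩
    · rintro ⟨h1, h2⟩
      have hy : y ∈ Set.Icc 1 m := ⟨h1, h2.trans (hmem p).2⟩
      rw [← hv.2] at hy
      obtain ⟨q, rfl⟩ := hy
      exact ⟨q, h2, rfl⟩
  have hcard := Finset.card_image_of_injective
    (Finset.univ.filter fun q => v q ≤ v p) hv.1
  rw [himg, Nat.card_Icc] at hcard
  omega

/-- a child has at most `b + 2` active values. -/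
theorem stmt4 (n : ℕ) (hn : 1 ≤ n) (u : Fin (2 * n) → ℕ)
    (hu : IsPermWord (2 * n) u) (halt : Alternating u) (havoid : ¬ Contains2143 u)
    (b : ℕ) (hb : (activeSet u).ncard = b)
    (w : Fin (2 * n + 2) → ℕ) (hw : IsPermWord (2 * n + 2) w)
    (hwalt : Alternating w) (hwavoid : ¬ Contains2143 w)
    (hiso : ∀ p q : Fin (2 * n),
      u p < u q ↔ w (Fin.castLE (by omega) p) < w (Fin.castLE (by omega) q)) :
    (activeSet w).ncard ≤ b + 2 := by
  classical
  have hle2 : 2 * n ≤ 2 * n + 2 := by omega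
  set P1 : Fin (2 * n + 2) := ⟨2 * n, by omega⟩ with hP1
  set P2 : Fin (2 * n + 2) := ⟨2 * n + 1, by omega⟩ with hP2
  have hwmem : ∀ q, 1 ≤ w q ∧ w q ≤ 2 * n + 2 := by
    intro q
    have hq : w q ∈ Set.Icc 1 (2 * n + 2) := by rw [← hw.2]; exact ⟨q, rfl⟩
    exact hq
  have hst : w P1 ≠ w P2 := by
    intro h
    have h2 := hw.1 h
    rw [Fin.ext_iff] at h2
    simp [hP1, hP2] at h2
  have hc1 : ∀ q : Fin (2 * n), w P1 ≠ w (Fin.castLE hle2 q) := by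
    intro q h
    have h2 := hw.1 h
    have h3 : (2 * n : ℕ) = (q : ℕ) := by simpa [hP1, Fin.ext_iff] using h2
    have := q.isLt; omega
  have hc2 : ∀ q : Fin (2 * n), w P2 ≠ w (Fin.castLE hle2 q) := by
    intro q h
    have h2 := hw.1 h
    have h3 : (2 * n + 1 : ℕ) = (q : ℕ) := by simpa [hP2, Fin.ext_iff] using h2
    have := q.isLt; omega
  -- K1 : the value of w at a non-final position equals u's value plus bumps
  have K1 : ∀ p : Fin (2 * n),
      w (Fin.castLE hle2 p) = u p
        + ((if w P1 ≤ w (Fin.castLE hle2 p) then 1 else 0)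
         + (if w P2 ≤ w (Fin.castLE hle2 p) then 1 else 0)) := by
    intro p
    have hrank_w := rank_eq hw (Fin.castLE hle2 p)
    have hrank_u := rank_eq hu p
    have hsplit := Finset.card_filter_add_card_filter_not
      (s := Finset.univ.filter fun q : Fin (2 * n + 2) => w q ≤ w (Fin.castLE hle2 p))
      (fun q : Fin (2 * n + 2) => (q : ℕ) < 2 * n)
    have hle : ∀ q : Fin (2 * n),
        u q ≤ u p ↔ w (Fin.castLE hle2 q) ≤ w (Fin.castLE hle2 p) := by
      intro q
      rcases eq_or_ne q p with rfl | hne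
      · simp
      constructor
      · intro h
        rcases lt_or_eq_of_le h with h | h
        · exact ((hiso q p).mp h).le
        · exact absurd (hu.1 h) hne
      · intro h
        rcases lt_or_eq_of_le h with h | h
        · exact ((hiso q p).mpr h).le
        · exact absurd (Fin.castLE_injective hle2 (hw.1 h)) hne
    have himg1 : (Finset.univ.filter fun q : Fin (2 * n) => u q ≤ u p).image (Fin.castLE hle2)
        = (Finset.univ.filter fun q : Fin (2 * n + 2) =>
            w q ≤ w (Fin.castLE hle2 p)).filter (fun q : Fin (2 * n + 2) => (q : ℕ) < 2 * n) := by
      ext q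
      simp only [Finset.mem_image, Finset.mem_filter, Finset.mem_univ, true_and]
      constructor
      · rintro ⟨q', hq', rfl⟩
        exact ⟨(hle q').mp hq', q'.isLt⟩
      · rintro ⟨h1, h2⟩
        exact ⟨⟨(q : ℕ), h2⟩, (hle ⟨(q : ℕ), h2⟩).mpr h1, rfl⟩
    have hcard1 : ((Finset.univ.filter fun q : Fin (2 * n + 2) =>
        w q ≤ w (Fin.castLE hle2 p)).filter (fun q : Fin (2 * n + 2) => (q : ℕ) < 2 * n)).card = u p := by
      rw [← himg1, Finset.card_image_of_injective _ (Fin.castLE_injective hle2), ← hrank_u]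
    have hset2 : (Finset.univ.filter fun q : Fin (2 * n + 2) =>
        w q ≤ w (Fin.castLE hle2 p)).filter (fun q : Fin (2 * n + 2) => ¬ (q : ℕ) < 2 * n)
        = ({P1, P2} : Finset (Fin (2 * n + 2))).filter
            (fun q => w q ≤ w (Fin.castLE hle2 p)) := by
      ext q
      simp only [Finset.mem_filter, Finset.mem_univ, true_and, Finset.mem_insert,
        Finset.mem_singleton]
      constructor
      · rintro ⟨h1, h2⟩
        refine ⟨?_, h1⟩
        have hq := q.isLt
        rcases Nat.lt_or_ge (q : ℕ) (2 * n + 1) with h | h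
        · left; apply Fin.ext; simp [hP1]; omega
        · right; apply Fin.ext; simp [hP2]; omega
      · rintro ⟨h1, h2⟩
        rcases h1 with rfl | rfl
        · exact ⟨h2, by simp [hP1]⟩
        · exact ⟨h2, by simp [hP2]⟩
    have hP12 : P1 ≠ P2 := by
      intro h; rw [Fin.ext_iff] at h; simp [hP1, hP2] at h
    have hcard2 : (({P1, P2} : Finset (Fin (2 * n + 2))).filter
        (fun q => w q ≤ w (Fin.castLE hle2 p))).card
        = ((if w P1 ≤ w (Fin.castLE hle2 p) then 1 else 0)
         + (if w P2 ≤ w (Fin.castLE hle2 p) then 1 else 0)) := by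
      rw [Finset.filter_insert, Finset.filter_singleton]
      split_ifs with h1 h2 h2
      · rw [Finset.card_insert_of_notMem (by simp [hP12])]; simp
      · simp
      · simp
      · simp
    rw [hset2] at hsplit
    rw [hcard1, hcard2] at hsplit
    omega
  -- the flattening map
  set f : ℕ → ℕ := fun c =>
    c - ((if w P1 < c then 1 else 0) + (if w P2 < c then 1 else 0)) with hf
  have K2 : ∀ (c : ℕ) (p : Fin (2 * n)),
      c ≤ w (Fin.castLE hle2 p) ↔ f c ≤ u p := by
    intro c p
    have h1 := K1 p
    have h2 := hc1 p
    have h3 := hc2 p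
    simp only [hf]
    split_ifs at h1 ⊢ <;> omega
  -- transfer of activeness
  have hactive : ∀ c : ℕ, IsActive w c → IsActive u (f c) := by
    intro c hc hcon
    apply hc
    obtain ⟨i1, i2, i3, i4, h12, h23, h34, hv1, hv2, hv3⟩ := hcon
    set G : Fin (2 * n + 1) → Fin (2 * n + 3) := fun j =>
      if h : (j : ℕ) < 2 * n then ⟨(j : ℕ), by omega⟩ else ⟨2 * n + 2, by omega⟩ with hG
    have hGmono : ∀ a b2 : Fin (2 * n + 1), a < b2 → G a < G b2 := by
      intro a b2 hab
      have ha' := a.isLt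
      have hb' := b2.isLt
      rw [Fin.lt_def] at hab
      simp only [hG]
      split_ifs with h h' h' <;> rw [Fin.lt_def] <;> simp <;> omega
    have hcmp : ∀ a b2 : Fin (2 * n + 1),
        extendBy u (f c) a < extendBy u (f c) b2 →
          extendBy w c (G a) < extendBy w c (G b2) := by
      intro a b2 hab
      by_cases h1 : (a : ℕ) < 2 * n <;> by_cases h2 : (b2 : ℕ) < 2 * n
      · have ea : extendBy u (f c) a
            = if f c ≤ u ⟨(a : ℕ), h1⟩ then u ⟨(a : ℕ), h1⟩ + 1 else u ⟨(a : ℕ), h1⟩ :=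
          extendBy_lt u (f c) a h1
        have eb : extendBy u (f c) b2
            = if f c ≤ u ⟨(b2 : ℕ), h2⟩ then u ⟨(b2 : ℕ), h2⟩ + 1 else u ⟨(b2 : ℕ), h2⟩ :=
          extendBy_lt u (f c) b2 h2
        have ea' : extendBy w c (G a)
            = if c ≤ w (Fin.castLE hle2 ⟨(a : ℕ), h1⟩)
              then w (Fin.castLE hle2 ⟨(a : ℕ), h1⟩) + 1
              else w (Fin.castLE hle2 ⟨(a : ℕ), h1⟩) := by
          have hGa : G a = ⟨(a : ℕ), by omega⟩ := dif_pos h1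
          rw [hGa]
          exact extendBy_lt w c ⟨(a : ℕ), by omega⟩ (by simpa using Nat.lt_of_lt_of_le h1 hle2)
        have eb' : extendBy w c (G b2)
            = if c ≤ w (Fin.castLE hle2 ⟨(b2 : ℕ), h2⟩)
              then w (Fin.castLE hle2 ⟨(b2 : ℕ), h2⟩) + 1
              else w (Fin.castLE hle2 ⟨(b2 : ℕ), h2⟩) := by
          have hGb : G b2 = ⟨(b2 : ℕ), by omega⟩ := dif_pos h2
          rw [hGb]
          exact extendBy_lt w c ⟨(b2 : ℕ), by omega⟩ (by simpa using Nat.lt_of_lt_of_le h2 hle2)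
        have hio := hiso ⟨(a : ℕ), h1⟩ ⟨(b2 : ℕ), h2⟩
        rw [ea, eb] at hab
        rw [ea', eb']
        split_ifs at hab ⊢ <;> omega
      · have ea : extendBy u (f c) a
            = if f c ≤ u ⟨(a : ℕ), h1⟩ then u ⟨(a : ℕ), h1⟩ + 1 else u ⟨(a : ℕ), h1⟩ :=
          extendBy_lt u (f c) a h1
        have eb : extendBy u (f c) b2 = f c := extendBy_last u (f c) b2 h2
        have ea' : extendBy w c (G a)
            = if c ≤ w (Fin.castLE hle2 ⟨(a : ℕ), h1⟩)
              then w (Fin.castLE hle2 ⟨(a : ℕ), h1⟩) + 1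
              else w (Fin.castLE hle2 ⟨(a : ℕ), h1⟩) := by
          have hGa : G a = ⟨(a : ℕ), by omega⟩ := dif_pos h1
          rw [hGa]
          exact extendBy_lt w c ⟨(a : ℕ), by omega⟩ (by simpa using Nat.lt_of_lt_of_le h1 hle2)
        have eb' : extendBy w c (G b2) = c := by
          have hGb : G b2 = ⟨2 * n + 2, by omega⟩ := dif_neg h2
          rw [hGb]
          exact extendBy_last w c _ (by simp)
        have hk := K2 c ⟨(a : ℕ), h1⟩
        rw [ea, eb] at hab
        rw [ea', eb']
        split_ifs at hab ⊢ <;> omega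
      · have ea : extendBy u (f c) a = f c := extendBy_last u (f c) a h1
        have eb : extendBy u (f c) b2
            = if f c ≤ u ⟨(b2 : ℕ), h2⟩ then u ⟨(b2 : ℕ), h2⟩ + 1 else u ⟨(b2 : ℕ), h2⟩ :=
          extendBy_lt u (f c) b2 h2
        have ea' : extendBy w c (G a) = c := by
          have hGa : G a = ⟨2 * n + 2, by omega⟩ := dif_neg h1
          rw [hGa]
          exact extendBy_last w c _ (by simp)
        have eb' : extendBy w c (G b2)
            = if c ≤ w (Fin.castLE hle2 ⟨(b2 : ℕ), h2⟩)
              then w (Fin.castLE hle2 ⟨(b2 : ℕ), h2⟩) + 1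
              else w (Fin.castLE hle2 ⟨(b2 : ℕ), h2⟩) := by
          have hGb : G b2 = ⟨(b2 : ℕ), by omega⟩ := dif_pos h2
          rw [hGb]
          exact extendBy_lt w c ⟨(b2 : ℕ), by omega⟩ (by simpa using Nat.lt_of_lt_of_le h2 hle2)
        have hk := K2 c ⟨(b2 : ℕ), h2⟩
        rw [ea, eb] at hab
        rw [ea', eb']
        split_ifs at hab ⊢ <;> omega
      · have ea : extendBy u (f c) a = f c := extendBy_last u (f c) a h1
        have eb : extendBy u (f c) b2 = f c := extendBy_last u (f c) b2 h2
        rw [ea, eb] at hab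
        omega
    exact ⟨G i1, G i2, G i3, G i4, hGmono _ _ h12, hGmono _ _ h23, hGmono _ _ h34,
      hcmp _ _ hv1, hcmp _ _ hv2, hcmp _ _ hv3⟩
  -- f maps the active set of w into the active set of u
  have hsb := hwmem P1
  have htb := hwmem P2
  have hfmem : ∀ c ∈ activeSet w, f c ∈ activeSet u := by
    intro c hc
    obtain ⟨h1, h2, h3⟩ := hc
    refine ⟨?_, ?_, hactive c h3⟩
    · simp only [hf]; split_ifs <;> omega
    · simp only [hf]; split_ifs <;> omega
  -- f is injective away from the two bad values
  have hinj : Set.InjOn f (activeSet w \ {w P1 + 1, w P2 + 1}) := by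
    intro c hc d hd hcd
    simp only [Set.mem_diff, Set.mem_insert_iff, Set.mem_singleton_iff, not_or] at hc hd
    have hcx := hc.2
    have hdx := hd.2
    simp only [hf] at hcd
    rcases Nat.lt_trichotomy c d with h | h | h
    · exfalso; split_ifs at hcd <;> omega
    · exact h
    · exfalso; split_ifs at hcd <;> omega
  -- counting
  have hWfin : (activeSet w).Finite :=
    (Set.finite_Icc 1 (2 * n + 2 + 1)).subset fun c hc => ⟨hc.1, hc.2.1⟩
  have hUfin : (activeSet u).Finite :=
    (Set.finite_Icc 1 (2 * n + 1)).subset fun c hc => ⟨hc.1, hc.2.1⟩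
  have hsub : activeSet w ⊆
      (activeSet w \ {w P1 + 1, w P2 + 1}) ∪ {w P1 + 1, w P2 + 1} := by
    intro c hc
    by_cases h : c ∈ ({w P1 + 1, w P2 + 1} : Set ℕ)
    · exact Or.inr h
    · exact Or.inl ⟨hc, h⟩
  have hpairfin : ({w P1 + 1, w P2 + 1} : Set ℕ).Finite := (Set.finite_singleton _).insert _
  have h5 : (activeSet w \ {w P1 + 1, w P2 + 1}).ncard ≤ (activeSet u).ncard :=
    Set.ncard_le_ncard_of_injOn f (fun c hc => hfmem c hc.1) hinj hUfin
  have h6 : (activeSet w).ncard ≤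
      ((activeSet w \ {w P1 + 1, w P2 + 1}) ∪ {w P1 + 1, w P2 + 1}).ncard :=
    Set.ncard_le_ncard hsub ((hWfin.diff).union hpairfin)
  have h7 := Set.ncard_union_le (activeSet w \ {w P1 + 1, w P2 + 1})
    ({w P1 + 1, w P2 + 1} : Set ℕ)
  have h8 : ({w P1 + 1, w P2 + 1} : Set ℕ).ncard ≤ 2 := by
    refine (Set.ncard_insert_le _ _).trans ?_
    simp [Set.ncard_singleton]
  omega
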